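/- Let A be an equality template (a relational structure on a countably infinite set all of whose relations are first-order definable from equality alone). Either A has a constant polymorphism, or the disequality relation ≠ is primitive positively definable in A. -/

import Mathlib

open FirstOrder FirstOrder.Language FirstOrder.Language.Structure Function

universe u v w

/-- Componentwise structure on a Pi type. -/
instance piStructure {L : Language} {ι : Type*} (M : ι → Type*)
    [∀ i, L.Structure (M i)] : L.Structure (∀ i, M i) where
  funMap f x i := funMap f fun j => x j i
  RelMap r x := ∀ i, RelMap r fun j => x j i

/-- Componentwise structure on a binary product. -/
instance prodStructure {L : Language} {M N : Type*} [L.Structure M] [L.Structure N] :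
    L.Structure (M × N) where
  funMap f x := (funMap f fun i => (x i).1, funMap f fun i => (x i).2)
  RelMap r x := RelMap r (fun i => (x i).1) ∧ RelMap r fun i => (x i).2

/-- `a : ℕ → A` is `k`-periodic: `k > 0` and `a i = a (i % k)` for all `i`. -/
def IsPeriodicWith {A : Type*} (a : ℕ → A) (k : ℕ) : Prop :=
  0 < k ∧ ∀ i, a i = a (i % k)

/-- `a : ℕ → A` is periodic if it is `k`-periodic for some `k > 0`. -/
def IsPeriodic {A : Type*} (a : ℕ → A) : Prop :=
  ∃ k, IsPeriodicWith a k

theorem isPeriodicWith_of_dvd {A : Type*} {a : ℕ → A} {k m : ℕ}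
    (h : IsPeriodicWith a k) (hm : 0 < m) (hd : k ∣ m) : IsPeriodicWith a m :=
  ⟨hm, fun i => by rw [h.2 i, h.2 (i % m), Nat.mod_mod_of_dvd i hd]⟩

/-- The set of periodic functions as a substructure of the direct power `A^ℕ`. -/
def periodicSubstructure (L : Language) (A : Type w) [L.Structure A] :
    L.Substructure (ℕ → A) where
  carrier := {a | IsPeriodic a}
  fun_mem := by
    intro n f x hx
    choose k hk using hx
    refine ⟨∏ j, k j, Finset.prod_pos fun j _ => (hk j).1, fun i => ?_⟩
    show funMap f (fun j => x j i) = funMap f (fun j => x j (i % ∏ j, k j))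
    congr 1
    funext j
    exact (isPeriodicWith_of_dvd (hk j) (Finset.prod_pos fun j _ => (hk j).1)
      (Finset.dvd_prod_of_mem k (Finset.mem_univ j))).2 i

/-- The `k`-periodic sequence `⟨x 0 ⋯ x (k-1)⟩`. -/
def perSeq {A : Type*} (k : ℕ) (hk : 0 < k) (x : Fin k → A) : ℕ → A :=
  fun i => x ⟨i % k, Nat.mod_lt i hk⟩

theorem perSeq_mem {L : Language} {A : Type w} [L.Structure A]
    (k : ℕ) (hk : 0 < k) (x : Fin k → A) : perSeq k hk x ∈ periodicSubstructure L A :=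
  ⟨k, hk, fun i => congrArg x (Fin.ext (Nat.mod_mod_of_dvd i dvd_rfl).symm)⟩

/-- The canonical embedding map `A^k → A^per` on elements. -/
def ekPer {L : Language} {A : Type w} [L.Structure A] (k : ℕ) (hk : 0 < k)
    (x : Fin k → A) : periodicSubstructure L A :=
  ⟨perSeq k hk x, perSeq_mem k hk x⟩

/-- Positive Horn formulas: built from atomic formulas using `∧`, `∃`, `∀`. -/
inductive IsPositiveHorn {L : Language} {α : Type*} :
    ∀ {n : ℕ}, L.BoundedFormula α n → Prop
  | equal {n} (t₁ t₂ : L.Term (α ⊕ Fin n)) : IsPositiveHorn (t₁.bdEqual t₂)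
  | rel {n ℓ} (R : L.Relations ℓ) (ts : Fin ℓ → L.Term (α ⊕ Fin n)) :
      IsPositiveHorn (R.boundedFormula ts)
  | inf {n} {φ ψ : L.BoundedFormula α n} :
      IsPositiveHorn φ → IsPositiveHorn ψ → IsPositiveHorn (φ ⊓ ψ)
  | ex {n} {φ : L.BoundedFormula α (n + 1)} : IsPositiveHorn φ → IsPositiveHorn φ.ex
  | all {n} {φ : L.BoundedFormula α (n + 1)} : IsPositiveHorn φ → IsPositiveHorn φ.all

/-- Primitive positive formulas: built from atomic formulas using `∧` and `∃`. -/
inductive IsPrimitivePositive {L : Language} {α : Type*} :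
    ∀ {n : ℕ}, L.BoundedFormula α n → Prop
  | equal {n} (t₁ t₂ : L.Term (α ⊕ Fin n)) : IsPrimitivePositive (t₁.bdEqual t₂)
  | rel {n ℓ} (R : L.Relations ℓ) (ts : Fin ℓ → L.Term (α ⊕ Fin n)) :
      IsPrimitivePositive (R.boundedFormula ts)
  | inf {n} {φ ψ : L.BoundedFormula α n} :
      IsPrimitivePositive φ → IsPrimitivePositive ψ → IsPrimitivePositive (φ ⊓ ψ)
  | ex {n} {φ : L.BoundedFormula α (n + 1)} : IsPrimitivePositive φ → IsPrimitivePositive φ.ex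

/-- A periomorphism `h` preserves an `ℓ`-ary relation `R` over `A`. -/
def PreservesPer {L : Language} {A : Type w} [L.Structure A] {ℓ : ℕ}
    (h : periodicSubstructure L A →[L] A) (R : Set (Fin ℓ → A)) : Prop :=
  ∀ c : Fin ℓ → periodicSubstructure L A,
    (∀ i : ℕ, (fun j => (c j : ℕ → A) i) ∈ R) → (fun j => h (c j)) ∈ R

/-- A finitary operation `g : A^k → A` preserves an `ℓ`-ary relation `R` over `A`. -/
def PreservesOp {A : Type*} {k ℓ : ℕ} (g : (Fin k → A) → A) (R : Set (Fin ℓ → A)) : Prop :=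
  ∀ a : Fin k → Fin ℓ → A, (∀ i, a i ∈ R) → (fun j => g fun i => a i j) ∈ R


private lemma pp_exs {L : Language} {α : Type*} {n : ℕ} {φ : L.BoundedFormula α n}
    (h : IsPrimitivePositive φ) : IsPrimitivePositive φ.exs := by
  induction n with
  | zero => exact h
  | succ n ih => exact ih h.ex

private lemma exists_perm_comp {A : Type} [Countable A] [Infinite A] {n : ℕ} {x y : Fin n → A}
    (h : ∀ i j, x i = x j ↔ y i = y j) : ∃ σ : Equiv.Perm A, ∀ i, σ (x i) = y i := by
  classical
  have hfx : (Set.range x).Finite := Set.finite_range x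
  have hfy : (Set.range y).Finite := Set.finite_range y
  have hix : Infinite ((Set.range x)ᶜ : Set A) := hfx.infinite_compl.to_subtype
  have hiy : Infinite ((Set.range y)ᶜ : Set A) := hfy.infinite_compl.to_subtype
  obtain ⟨dx⟩ := nonempty_denumerable ((Set.range x)ᶜ : Set A)
  obtain ⟨dy⟩ := nonempty_denumerable ((Set.range y)ᶜ : Set A)
  let e₂ : ((Set.range x)ᶜ : Set A) ≃ ((Set.range y)ᶜ : Set A) :=
    (Denumerable.eqv _).trans (Denumerable.eqv _).symm
  let f : ↥(Set.range x) → ↥(Set.range y) :=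
    fun a => ⟨y a.2.choose, Set.mem_range_self _⟩
  have hf : ∀ i (hi : x i ∈ Set.range x), (f ⟨x i, hi⟩ : A) = y i := by
    intro i hi
    exact (h _ i).1 hi.choose_spec
  have hbij : Function.Bijective f := by
    constructor
    · rintro ⟨a, ha⟩ ⟨b, hb⟩ hab
      have : y ha.choose = y hb.choose := congrArg Subtype.val hab
      have hxx := (h ha.choose hb.choose).2 this
      have h1 : x ha.choose = a := ha.choose_spec
      have h2 : x hb.choose = b := hb.choose_spec
      exact Subtype.ext (show a = b by rw [← h1, ← h2, hxx])
    · rintro ⟨b, hb⟩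
      obtain ⟨i, rfl⟩ := hb
      exact ⟨⟨x i, Set.mem_range_self i⟩, Subtype.ext (hf i _)⟩
  let e₁ := Equiv.ofBijective f hbij
  refine ⟨(Equiv.Set.sumCompl (Set.range x)).symm.trans
    ((e₁.sumCongr e₂).trans (Equiv.Set.sumCompl (Set.range y))), fun i => ?_⟩
  have hmem : x i ∈ Set.range x := Set.mem_range_self i
  simp only [Equiv.trans_apply, Equiv.Set.sumCompl_symm_apply_of_mem hmem, Equiv.sumCongr_apply,
    Sum.map_inl, Equiv.Set.sumCompl_apply_inl]
  exact hf i hmem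

/-- for an equality template `A` (a relational structure on a countably
infinite set whose relations are invariant under all permutations of the universe),
either `A` has a constant polymorphism, or `≠` is primitive positively definable. -/
theorem stmt_19 {L : Language} [L.IsRelational] {A : Type} [L.Structure A]
    [Countable A] [Infinite A]
    (hinv : ∀ (n : ℕ) (r : L.Relations n) (σ : Equiv.Perm A) (x : Fin n → A),
      RelMap r (σ ∘ x) ↔ RelMap r x) :
    (∃ (c : A) (h : A →[L] A), ∀ a, h a = c) ∨
    (∃ φ : L.Formula (Fin 2), IsPrimitivePositive φ ∧
      ∀ x : Fin 2 → A, φ.Realize x ↔ x 0 ≠ x 1) := by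
  classical
  rcases Classical.em (∀ (n : ℕ) (r : L.Relations n),
      (∃ x : Fin n → A, RelMap r x) → ∃ d : A, RelMap r (fun _ : Fin n => d)) with hc | hc
  · -- constant polymorphism
    obtain ⟨c⟩ := (inferInstance : Nonempty A)
    refine Or.inl ⟨c, ⟨fun _ => c, fun {n} f => isEmptyElim f, ?_⟩, fun _ => rfl⟩
    intro n r x hx
    obtain ⟨d, hd⟩ := hc n r ⟨x, hx⟩
    have := (hinv n r (Equiv.swap d c) (fun _ => d)).2 hd
    have hswap : ((Equiv.swap d c) ∘ fun _ : Fin n => d) = ((fun _ => c) ∘ x) := by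
      funext i; simp [Equiv.swap_apply_left]
    rwa [hswap] at this
  · push_neg at hc
    obtain ⟨n, r, ⟨x₀, hx₀⟩, hnoconst⟩ := hc
    -- choose a tuple in r with minimal range cardinality
    set S : Set (Fin n → A) := {y | RelMap r y} with hS
    have hSne : {m | ∃ y ∈ S, (Set.range y).ncard = m}.Nonempty := ⟨_, x₀, hx₀, rfl⟩
    obtain ⟨x, hxS, hxcard⟩ := Nat.sInf_mem hSne
    have hmin : ∀ z ∈ S, (Set.range x).ncard ≤ (Set.range z).ncard := by
      intro z hz
      rw [hxcard]
      exact Nat.sInf_le ⟨z, hz, rfl⟩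
    -- x is not constant
    have hnc : ∃ i j, x i ≠ x j := by
      by_contra hcon
      push_neg at hcon
      rcases Nat.eq_zero_or_pos n with rfl | hn
      · obtain ⟨d⟩ := (inferInstance : Nonempty A)
        have hx : (fun _ : Fin 0 => d) = x₀ := funext fun i => i.elim0
        exact hnoconst d (hx ▸ hx₀)
      · exact hnoconst (x ⟨0, hn⟩) (by convert (show RelMap r x from hxS) using 1; funext i; exact hcon _ i)
    obtain ⟨i0, j0, hij⟩ := hnc
    -- representative function
    have hρex : ∀ i : Fin n, (Finset.univ.filter (fun j => x j = x i)).Nonempty :=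
      fun i => ⟨i, by simp⟩
    set ρ : Fin n → Fin n := fun i => (Finset.univ.filter (fun j => x j = x i)).min' (hρex i)
      with hρ
    have hρx : ∀ i, x (ρ i) = x i := by
      intro i
      have := Finset.min'_mem _ (hρex i)
      simpa using this
    have hρconst : ∀ i j, x i = x j → ρ i = ρ j := by
      intro i j hij'
      simp only [hρ, hij']
    -- the terms
    set t : Fin n → L.Term (Fin 2 ⊕ Fin n) := fun i =>
      if x i = x i0 then Term.var (Sum.inl 0)
      else if x i = x j0 then Term.var (Sum.inl 1)
      else Term.var (Sum.inr (ρ i)) with ht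
    refine Or.inr ⟨(r.boundedFormula t).exs, pp_exs (.rel r t), fun v => ?_⟩
    rw [BoundedFormula.realize_exs]
    constructor
    · rintro ⟨zs, hzs⟩ hveq
      rw [BoundedFormula.realize_rel] at hzs
      set z : Fin n → A := fun i => (t i).realize (Sum.elim v zs) with hz
      -- z factors through x
      set g : A → A := fun a =>
        if a = x i0 then v 0
        else if a = x j0 then v 1
        else if h : ∃ i, x i = a then zs (ρ h.choose) else v 0 with hg
      have hgz : ∀ i, g (x i) = z i := by
        intro i
        by_cases h1 : x i = x i0
        · simp [hg, hz, ht, h1]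
        · by_cases h2 : x i = x j0
          · simp [hg, hz, ht, h1, h2, Ne.symm hij]
          · have hex : ∃ j, x j = x i := ⟨i, rfl⟩
            have : ρ hex.choose = ρ i := hρconst _ _ hex.choose_spec
            simp [hg, hz, ht, h1, h2, hex, this]
      have hrz : RelMap r z := hzs
      have hcard : (Set.range z).ncard < (Set.range x).ncard := by
        have hzg : Set.range z = g '' Set.range x := by
          have hzc : z = g ∘ x := funext fun i => (hgz i).symm
          rw [hzc, Set.range_comp]
        have hsub : g '' Set.range x = g '' (Set.range x \ {x j0}) := by
          apply Set.Subset.antisymm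
          · rintro _ ⟨a, ⟨i, rfl⟩, rfl⟩
            by_cases h2 : x i = x j0
            · refine ⟨x i0, ⟨⟨i0, rfl⟩, fun hmem => hij (Set.mem_singleton_iff.1 hmem)⟩, ?_⟩
              have e1 : g (x i0) = v 0 := by simp [hg]
              have e2 : g (x i) = v 1 ∨ g (x i) = v 0 := by
                by_cases h1 : x i = x i0
                · exact Or.inr (by simp [hg, h1])
                · exact Or.inl (by simp [hg, h1, h2, Ne.symm hij])
              rcases e2 with e2 | e2 <;> rw [e1, e2, hveq]
            · exact ⟨x i, ⟨⟨i, rfl⟩, fun hmem => h2 (Set.mem_singleton_iff.1 hmem)⟩, rfl⟩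
          · exact Set.image_mono Set.diff_subset
        calc (Set.range z).ncard = (g '' (Set.range x \ {x j0})).ncard := by rw [hzg, hsub]
          _ ≤ (Set.range x \ {x j0}).ncard :=
              Set.ncard_image_le ((Set.finite_range x).diff)
          _ < (Set.range x).ncard :=
              Set.ncard_diff_singleton_lt_of_mem ⟨j0, rfl⟩ (Set.finite_range x)
      exact absurd (hmin z hrz) (not_le.2 hcard)
    · intro hvne
      -- build permutation sending x i0 ↦ v 0, x j0 ↦ v 1
      have hker : ∀ i j : Fin 2, ![x i0, x j0] i = ![x i0, x j0] j ↔ ![v 0, v 1] i = ![v 0, v 1] j := by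
        intro i j
        fin_cases i <;> fin_cases j <;>
          simp [hij, hij.symm, hvne, Ne.symm hvne, Matrix.cons_val_zero, Matrix.cons_val_one]
      obtain ⟨σ, hσ⟩ := exists_perm_comp hker
      have hσ0 : σ (x i0) = v 0 := by simpa using hσ 0
      have hσ1 : σ (x j0) = v 1 := by simpa using hσ 1
      refine ⟨fun j => σ (x j), ?_⟩
      rw [BoundedFormula.realize_rel]
      have : (fun i => (t i).realize (Sum.elim v fun j => σ (x j))) = σ ∘ x := by
        funext i
        by_cases h1 : x i = x i0
        · simp [ht, h1, ← hσ0]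
        · by_cases h2 : x i = x j0
          · simp [ht, h1, h2, Ne.symm hij, ← hσ1]
          · simp [ht, h1, h2, hρx]
      rw [this]
      exact (hinv n r σ x).2 hxS
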